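/- Suppose φ, v: [0,T]×M → ℝ are bounded with v ≤ 0, and for each δ ∈ (0,1) and each s₀ ≥ s_*(δ) one has sup(v - φ) ≤ s₀ + C₃ s₀^{-μ} ‖(v-φ)^+‖_{L¹}^μ, where s_*(δ) ≤ max(2‖(v₀-φ₀)^+‖_∞, 2δ‖v‖_∞, C₁ δ^{-a} ‖(v-φ)^+‖_{L¹}) with a = q₀(n+1)/(1-1/β). Then choosing δ = ‖(v-φ)^+‖_{L¹}^{1/(1+q₀(n+1))} and assuming ‖(v-φ)^+‖_{L¹} < 1, for any α < 1/(1+q₀(n+1)) (with μ = α/(1-α) and β large enough so that 1 - a α > α) there is a constant C such that sup_{[0,T]×M}(v - φ) ≤ C max(‖(v₀-φ₀)^+‖_{L^∞}, ‖(v-φ)^+‖_{L¹}^α). -/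
import Mathlib


/-- The optimization step in the stability theorem: from the abstract inequalities
`sup(v-φ) ≤ s₀ + C₃ s₀^{-μ} ‖(v-φ)^+‖₁^μ` (valid for `s₀ ≥ s_*(δ)`) and the bound
`s_*(δ) ≤ max(2‖(v₀-φ₀)^+‖_∞, 2δ‖v‖_∞, C₁ δ^{-a} ‖(v-φ)^+‖₁)`, choosing
`δ = ‖(v-φ)^+‖₁^{1/(1+q₀(n+1))}`, one obtains
`sup(v-φ) ≤ C max(‖(v₀-φ₀)^+‖_∞, ‖(v-φ)^+‖₁^α)` for any `α < 1/(1+q₀(n+1))`. -/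
theorem stmt15 (n : ℕ) (hn : 1 ≤ n) (q₀ : ℝ) (hq₀ : 1 < q₀)
    (C₁ C₃ Vb : ℝ) (hC₁ : 0 < C₁) (hC₃ : 0 < C₃) (hVb : 0 ≤ Vb)
    (α β a muv : ℝ) (hα : 0 < α) (hαlt : α < 1 / (1 + q₀ * ((n : ℝ) + 1)))
    (hβ : 1 < β) (ha : a = q₀ * ((n : ℝ) + 1) / (1 - 1 / β)) (hβa : α < 1 - a * α)
    (hmuv : muv = α / (1 - α)) :
    ∃ C > (0 : ℝ), ∀ S N1 N0 : ℝ, ∀ sstar : ℝ → ℝ,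
      0 < N1 → N1 < 1 → 0 ≤ N0 →
      (∀ δ : ℝ, 0 < δ → δ < 1 → ∀ s₀ : ℝ, sstar δ ≤ s₀ →
        S ≤ s₀ + C₃ * s₀ ^ (-muv) * N1 ^ muv) →
      (∀ δ : ℝ, 0 < δ → δ < 1 →
        sstar δ ≤ max (2 * N0) (max (2 * δ * Vb) (C₁ * δ ^ (-a) * N1))) →
      S ≤ C * max N0 (N1 ^ α) := by
  have hqn : (0 : ℝ) < q₀ * ((n : ℝ) + 1) := by
    have : (0:ℝ) < (n:ℝ) + 1 := by positivity
    nlinarith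
  have hα1 : α < 1 := by
    have h1 : (1:ℝ) < 1 + q₀ * ((n : ℝ) + 1) := by linarith
    calc α < 1 / (1 + q₀ * ((n : ℝ) + 1)) := hαlt
      _ < 1 := by rw [div_lt_one (by linarith)]; linarith
  have hmu : 0 < muv := by rw [hmuv]; exact div_pos hα (by linarith)
  set K : ℝ := max 2 (max (2 * Vb) (max C₁ 1)) with hK
  have hK2 : (2:ℝ) ≤ K := le_max_left _ _
  have hKpos : (0:ℝ) < K := lt_of_lt_of_le two_pos hK2
  refine ⟨K + C₃, by linarith, ?_⟩
  intro S N1 N0 sstar hN1 hN11 hN0 h1 h2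
  set δ := N1 ^ α with hδ
  have hδpos : 0 < δ := Real.rpow_pos_of_pos hN1 α
  have hδ1 : δ < 1 := Real.rpow_lt_one hN1.le hN11 hα
  set s₀ := max (max (2 * N0) (max (2 * δ * Vb) (C₁ * δ ^ (-a) * N1))) (N1 ^ α)
    with hs₀
  have hsstar : sstar δ ≤ s₀ := (h2 δ hδpos hδ1).trans (le_max_left _ _)
  have hS : S ≤ s₀ + C₃ * s₀ ^ (-muv) * N1 ^ muv := h1 δ hδpos hδ1 s₀ hsstar
  have hNα : 0 < N1 ^ α := Real.rpow_pos_of_pos hN1 α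
  have hs₀pos : 0 < s₀ := lt_of_lt_of_le hNα (le_max_right _ _)
  set T : ℝ := max N0 (N1 ^ α) with hT
  have hTpos : 0 < T := lt_of_lt_of_le hNα (le_max_right _ _)
  -- bound the second term
  have h2nd : C₃ * s₀ ^ (-muv) * N1 ^ muv ≤ C₃ * N1 ^ α := by
    have hle : s₀ ^ (-muv) ≤ (N1 ^ α) ^ (-muv) :=
      Real.rpow_le_rpow_of_nonpos hNα (le_max_right _ _) (neg_nonpos.mpr hmu.le)
    have key : (N1 ^ α) ^ (-muv) * N1 ^ muv = N1 ^ α := by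
      rw [← Real.rpow_mul hN1.le, ← Real.rpow_add hN1]
      congr 1
      have h1α : (1:ℝ) - α ≠ 0 := by linarith
      rw [hmuv]
      field_simp
      ring
    calc C₃ * s₀ ^ (-muv) * N1 ^ muv
        ≤ C₃ * (N1 ^ α) ^ (-muv) * N1 ^ muv := by
          apply mul_le_mul_of_nonneg_right
            (mul_le_mul_of_nonneg_left hle hC₃.le) (Real.rpow_pos_of_pos hN1 _).le
      _ = C₃ * N1 ^ α := by rw [mul_assoc, key]
  -- bound s₀
  have hs₀le : s₀ ≤ K * T := by
    have hNαT : N1 ^ α ≤ T := le_max_right _ _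
    apply max_le
    · apply max_le
      · calc 2 * N0 ≤ 2 * T := by
              have : N0 ≤ T := le_max_left _ _
              linarith
          _ ≤ K * T := mul_le_mul_of_nonneg_right hK2 hTpos.le
      · apply max_le
        · calc 2 * δ * Vb = (2 * Vb) * δ := by ring
            _ ≤ (2 * Vb) * T := mul_le_mul_of_nonneg_left hNαT (by positivity)
            _ ≤ K * T := mul_le_mul_of_nonneg_right
                ((le_max_left _ _).trans (le_max_right _ _)) hTpos.le
        · have hpow : δ ^ (-a) * N1 = N1 ^ (1 - a * α) := by
            rw [hδ, ← Real.rpow_mul hN1.le]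
            nth_rewrite 2 [← Real.rpow_one N1]
            rw [← Real.rpow_add hN1]
            ring_nf
          have hexp : N1 ^ (1 - a * α) ≤ N1 ^ α :=
            Real.rpow_le_rpow_of_exponent_ge hN1 hN11.le hβa.le
          calc C₁ * δ ^ (-a) * N1 = C₁ * (δ ^ (-a) * N1) := by ring
            _ = C₁ * N1 ^ (1 - a * α) := by rw [hpow]
            _ ≤ C₁ * N1 ^ α := mul_le_mul_of_nonneg_left hexp hC₁.le
            _ ≤ C₁ * T := mul_le_mul_of_nonneg_left hNαT hC₁.le
            _ ≤ K * T := mul_le_mul_of_nonneg_right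
                (((le_max_left _ _).trans (le_max_right _ _)).trans
                  (le_max_right _ _)) hTpos.le
    · calc N1 ^ α ≤ T := hNαT
        _ = 1 * T := (one_mul T).symm
        _ ≤ K * T := mul_le_mul_of_nonneg_right (by linarith) hTpos.le
  have hNαT : N1 ^ α ≤ T := le_max_right _ _
  calc S ≤ s₀ + C₃ * s₀ ^ (-muv) * N1 ^ muv := hS
    _ ≤ K * T + C₃ * N1 ^ α := by linarith
    _ ≤ K * T + C₃ * T := by nlinarith
    _ = (K + C₃) * T := by ring
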